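/- For any acyclic connected relational structure N (i.e., inc(N) is a tree and no element occurs twice in a fact), there exists a tree T(N) whose nodes are labeled by the facts of N such that: (i) each fact of N labels exactly one node of T(N); (ii) if node u is the parent of node v in T(N), then the facts labeling u and v share at most one element of N; and (iii) if the facts labeling two nodes u and v share an element, then u and v are siblings or one is the parent of the other. -/

import Mathlib

/-- An interpretation of a relational signature `(σ, ar)` over a domain `α`. -/
def Itp (σ : Type) (ar : σ → ℕ) (α : Type) : Type :=
  ∀ r : σ, (Fin (ar r) → α) → Prop

/-- A (potential) fact over domain `α`: a relation symbol together with a tuple. -/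
def AFact (σ : Type) (ar : σ → ℕ) (α : Type) : Type := Σ r : σ, Fin (ar r) → α

/-- The incidence graph of a structure: a bipartite graph on facts and elements, with an edge
between a fact of the structure and each element occurring in it. -/
def IncG {σ : Type} {ar : σ → ℕ} {α : Type} (M : Itp σ ar α) :
    SimpleGraph (AFact σ ar α ⊕ α) where
  Adj x y :=
    (∃ f a, x = Sum.inl f ∧ y = Sum.inr a ∧ M f.1 f.2 ∧ a ∈ Set.range f.2) ∨
    (∃ f a, y = Sum.inl f ∧ x = Sum.inr a ∧ M f.1 f.2 ∧ a ∈ Set.range f.2)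
  symm := by
    constructor
    intro x y h
    rcases h with h | h
    · exact Or.inr h
    · exact Or.inl h
  loopless := by
    constructor
    rintro x (⟨f, a, h1, h2, -, -⟩ | ⟨f, a, h1, h2, -, -⟩) <;>
      (subst h1; exact Sum.inl_ne_inr h2)

/-- No element occurs twice in any fact of `M`. -/
def NoRepeat {σ : Type} {ar : σ → ℕ} {α : Type} (M : Itp σ ar α) : Prop :=
  ∀ (r : σ) (t : Fin (ar r) → α), M r t → Function.Injective t

/-- The elements occurring in a fact. -/
def elemsOf {σ : Type} {ar : σ → ℕ} {α : Type} (f : AFact σ ar α) : Set α :=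
  Set.range f.2

section Aux
variable {σ : Type} {ar : σ → ℕ} {α : Type} {N : Itp σ ar α}

lemma IncG_adj_of_mem {f : AFact σ ar α} {a : α} (hf : N f.1 f.2) (ha : a ∈ elemsOf f) :
    (IncG N).Adj (Sum.inl f) (Sum.inr a) :=
  Or.inl ⟨f, a, rfl, rfl, hf, ha⟩

lemma IncG_adj_inr {a : α} {y : AFact σ ar α ⊕ α} (h : (IncG N).Adj (Sum.inr a) y) :
    ∃ g : AFact σ ar α, y = Sum.inl g ∧ N g.1 g.2 ∧ a ∈ elemsOf g := by
  rcases h with ⟨f, b, h1, h2, hN, hb⟩ | ⟨f, b, h1, h2, hN, hb⟩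
  · exact absurd h1 (by simp)
  · obtain rfl : b = a := by injection h2.symm
    exact ⟨f, h1, hN, hb⟩

lemma IncG_adj_inl {f : AFact σ ar α} {y : AFact σ ar α ⊕ α} (h : (IncG N).Adj (Sum.inl f) y) :
    ∃ a : α, y = Sum.inr a ∧ a ∈ elemsOf f := by
  rcases h with ⟨f', b, h1, h2, hN, hb⟩ | ⟨f', b, h1, h2, hN, hb⟩
  · obtain rfl : f' = f := by injection h1.symm
    exact ⟨b, h2, hb⟩
  · exact absurd h2 (by simp)

lemma shareAtMostOne (hacyc : (IncG N).IsAcyclic) {f g : AFact σ ar α}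
    (hf : N f.1 f.2) (hg : N g.1 g.2) (hfg : f ≠ g) :
    Set.Subsingleton (elemsOf f ∩ elemsOf g) := by
  rintro a ⟨haf, hag⟩ b ⟨hbf, hbg⟩
  by_contra hab
  refine hacyc
    (SimpleGraph.Walk.cons (IncG_adj_of_mem hf haf)
      (SimpleGraph.Walk.cons (IncG_adj_of_mem hg hag).symm
        (SimpleGraph.Walk.cons (IncG_adj_of_mem hg hbg)
          (SimpleGraph.Walk.cons (IncG_adj_of_mem hf hbf).symm SimpleGraph.Walk.nil)))) ?_
  rw [SimpleGraph.Walk.cons_isCycle_iff]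
  constructor
  · simp [SimpleGraph.Walk.isPath_def, hab, hfg, Ne.symm hfg, Ne.symm hab]
  · simp [Sym2.eq_iff, hab, hfg, Ne.symm hfg, Ne.symm hab]

end Aux

/-- for every acyclic connected structure `N` there is a tree `T(N)` whose
nodes are (in bijection with) the facts of `N` — here we take the nodes to *be* the facts,
organized by a parent function `par` with a root — such that: every node reaches the root by
iterating `par` (so `T(N)` is a tree in which each fact labels exactly one node); a node and
its parent share at most one element; and any two facts sharing an element are siblings or
one is the parent of the other. -/
theorem acyclic_connected_structure_has_fact_tree {σ : Type} {ar : σ → ℕ} {α : Type}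
    (N : Itp σ ar α)
    (hnr : NoRepeat N)
    (hacyc : (IncG N).IsAcyclic)
    (hne : Nonempty {f : AFact σ ar α // N f.1 f.2})
    (hconn : ∀ f : {f : AFact σ ar α // N f.1 f.2}, ∀ g : {f : AFact σ ar α // N f.1 f.2},
      Relation.ReflTransGen
        (fun x y : {f : AFact σ ar α // N f.1 f.2} =>
          (elemsOf x.1 ∩ elemsOf y.1).Nonempty) f g) :
    ∃ (root : {f : AFact σ ar α // N f.1 f.2})
      (par : {f : AFact σ ar α // N f.1 f.2} → {f : AFact σ ar α // N f.1 f.2}),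
      par root = root ∧
      (∀ f, ∃ n : ℕ, par^[n] f = root) ∧
      (∀ f, f ≠ root → Set.Subsingleton (elemsOf f.1 ∩ elemsOf (par f).1)) ∧
      (∀ f g, (elemsOf f.1 ∩ elemsOf g.1).Nonempty →
        par f = par g ∨ par f = g ∨ par g = f) := by
  classical
  obtain ⟨root⟩ := hne
  have hadj : ∀ (f : {f : AFact σ ar α // N f.1 f.2}) (a : α), a ∈ elemsOf f.1 →
      (IncG N).Adj (Sum.inl f.1) (Sum.inr a) := fun f a ha => IncG_adj_of_mem f.2 ha
  -- reachability of the root from every fact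
  have hreach : ∀ f : {f : AFact σ ar α // N f.1 f.2},
      (IncG N).Reachable (Sum.inl f.1) (Sum.inl root.1) := by
    intro f
    induction hconn f root with
    | refl => exact SimpleGraph.Reachable.refl _
    | tail _ hbc ih =>
      rename_i b c _
      obtain ⟨a, hab, hac⟩ := hbc
      exact ih.trans (((hadj b a hab).reachable).trans ((hadj c a hac).reachable.symm))
  -- the unique path from each fact to the root
  let P : ∀ f : {f : AFact σ ar α // N f.1 f.2},
      (IncG N).Path (Sum.inl f.1) (Sum.inl root.1) := fun f => (hreach f).some.toPath
  have upath : ∀ {u v : AFact σ ar α ⊕ α} (p q : (IncG N).Path u v), p = q :=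
    hacyc.path_unique
  have hnil : ∀ (f : {f : AFact σ ar α // N f.1 f.2}), f ≠ root → ¬ (P f).1.Nil := by
    intro f hf
    exact SimpleGraph.Walk.not_nil_of_ne
      (fun h => hf (Subtype.ext (Sum.inl.inj h)))
  -- second vertex is an element, third vertex exists and is a fact
  have key : ∀ f : {f : AFact σ ar α // N f.1 f.2}, f ≠ root →
      ∃ g : {f : AFact σ ar α // N f.1 f.2}, Sum.inl g.1 = (P f).1.getVert 2 := by
    intro f hf
    have hnn := hnil f hf
    obtain ⟨a, ha, _⟩ := IncG_adj_inl (y := (P f).1.getVert 1) ((P f).1.adj_snd hnn)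
    have hlen : 2 ≤ (P f).1.length := by
      by_contra hl
      push_neg at hl
      interval_cases h : (P f).1.length
      · exact hnn (SimpleGraph.Walk.nil_iff_length_eq.mpr h)
      · have := (P f).1.getVert_length
        rw [h] at this
        rw [this] at ha
        exact Sum.inl_ne_inr ha
    have h2 : (IncG N).Adj ((P f).1.getVert 1) ((P f).1.getVert 2) :=
      (P f).1.adj_getVert_succ (by omega)
    rw [ha] at h2
    obtain ⟨g, hg, hNg, _⟩ := IncG_adj_inr h2
    exact ⟨⟨g, hNg⟩, hg.symm⟩
  let par : {f : AFact σ ar α // N f.1 f.2} → {f : AFact σ ar α // N f.1 f.2} :=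
    fun f => if h : f = root then root else (key f h).choose
  have hpar_root : par root = root := by simp [par]
  have hpar_spec : ∀ (f : {f : AFact σ ar α // N f.1 f.2}) (h : f ≠ root),
      Sum.inl (par f).1 = (P f).1.getVert 2 := by
    intro f h
    simp only [par, dif_neg h]
    exact (key f h).choose_spec
  -- structural lemma: the path of `par f` is two shorter, and `par f ≠ f`
  have htail : ∀ (f : {f : AFact σ ar α // N f.1 f.2}) (hf : f ≠ root),
      (P (par f)).1.length + 2 = (P f).1.length ∧ par f ≠ f := by
    intro f hf
    have hnn := hnil f hf
    obtain ⟨a, ha, _⟩ := IncG_adj_inl (y := (P f).1.getVert 1) ((P f).1.adj_snd hnn)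
    have hnn2 : ¬ (P f).1.tail.Nil := by
      apply SimpleGraph.Walk.not_nil_of_ne
      rw [SimpleGraph.Walk.snd, ha]
      exact fun h => Sum.inr_ne_inl h
    have hgv : (P f).1.tail.getVert 1 = (P f).1.getVert 2 :=
      SimpleGraph.Walk.getVert_tail _
    have hgv2 : (P f).1.tail.getVert 1 = Sum.inl (par f).1 := by
      rw [hgv, ← hpar_spec f hf]
    have hq : ((P f).1.tail.tail.copy hgv2 rfl).IsPath :=
      (SimpleGraph.Walk.isPath_copy _ hgv2 rfl).mpr (((P f).2.tail).tail)
    have hPeq : P (par f) = ⟨(P f).1.tail.tail.copy hgv2 rfl, hq⟩ := upath _ _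
    constructor
    · rw [hPeq]
      simp only [SimpleGraph.Walk.length_copy]
      have e1 : (P f).1.tail.tail.length + 1 = (P f).1.tail.length :=
        SimpleGraph.Walk.length_tail_add_one hnn2
      have e2 : (P f).1.tail.length + 1 = (P f).1.length :=
        SimpleGraph.Walk.length_tail_add_one hnn
      omega
    · -- par f ≠ f
      intro h
      have hmem : (P f).1.tail.getVert 1 ∈ (P f).1.tail.support := by
        rw [SimpleGraph.Walk.mem_support_iff_exists_getVert]
        refine ⟨1, rfl, ?_⟩
        have e1 : (P f).1.tail.length + 1 = (P f).1.length :=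
          SimpleGraph.Walk.length_tail_add_one hnn
      -- need 1 ≤ tail length
        have hlen : 2 ≤ (P f).1.length := by
          by_contra hl
          push_neg at hl
          interval_cases hll : (P f).1.length
          · exact hnn (SimpleGraph.Walk.nil_iff_length_eq.mpr hll)
          · have := (P f).1.getVert_length
            rw [hll] at this
            rw [this] at ha
            exact Sum.inl_ne_inr ha
        omega
      rw [SimpleGraph.Walk.support_tail_of_not_nil _ hnn] at hmem
      rw [hgv2, h] at hmem
      have hnd : (P f).1.support.Nodup := (P f).2.support_nodup
      rw [(P f).1.support_eq_cons] at hnd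
      exact (List.nodup_cons.mp hnd).1 hmem
  -- iterating par reaches the root
  have hiter : ∀ (n : ℕ) (f : {f : AFact σ ar α // N f.1 f.2}), (P f).1.length ≤ n →
      ∃ m : ℕ, par^[m] f = root := by
    intro n
    induction n with
    | zero =>
      intro f h
      have : Sum.inl f.1 = Sum.inl root.1 :=
        (P f).1.eq_of_length_eq_zero (Nat.le_zero.mp h)
      exact ⟨0, Subtype.ext (Sum.inl.inj this)⟩
    | succ n ih =>
      intro f h
      by_cases hf : f = root
      · exact ⟨0, hf⟩
      · obtain ⟨hl, _⟩ := htail f hf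
        obtain ⟨m, hm⟩ := ih (par f) (by omega)
        exact ⟨m + 1, by rw [Function.iterate_succ_apply, hm]⟩
  refine ⟨root, par, hpar_root, fun f => hiter _ f le_rfl, ?_, ?_⟩
  · -- a node and its parent share at most one element
    intro f hf
    refine shareAtMostOne hacyc f.2 (par f).2 ?_
    intro h
    exact (htail f hf).2 (Subtype.ext h).symm
  · -- siblings property
    intro f g ⟨a, haf, hag⟩
    by_cases hfg : f = g
    · left; rw [hfg]
    have hra : (IncG N).Reachable (Sum.inr a) (Sum.inl root.1) :=
      ((hadj f a haf).symm.reachable).trans (hreach f)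
    set Q : (IncG N).Path (Sum.inr a) (Sum.inl root.1) := hra.some.toPath with hQ
    have hqnn : ¬ Q.1.Nil :=
      SimpleGraph.Walk.not_nil_of_ne (fun h => Sum.inr_ne_inl h)
    have h1 : (IncG N).Adj (Sum.inr a) (Q.1.getVert 1) := Q.1.adj_snd hqnn
    obtain ⟨g₀, hg₀eq, hNg₀, hag₀⟩ := IncG_adj_inr h1
    have main : ∀ h : {f : AFact σ ar α // N f.1 f.2}, a ∈ elemsOf h.1 → h.1 ≠ g₀ →
        h ≠ root ∧ par h = ⟨g₀, hNg₀⟩ := by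
      intro h hah hne0
      have hnot : Sum.inl h.1 ∉ Q.1.support := by
        intro hmem
        have hmem' : Sum.inl h.1 ∈ Q.1.tail.support := by
          rw [SimpleGraph.Walk.support_tail_of_not_nil _ hqnn]
          rw [Q.1.support_eq_cons, List.mem_cons] at hmem
          rcases hmem with h' | h'
          · exact absurd h' (by simp)
          · exact h'
        have hcyc : ((SimpleGraph.Walk.cons h1
            (Q.1.tail.takeUntil (Sum.inl h.1) hmem')).cons (hadj h a hah)).IsCycle := by
          rw [SimpleGraph.Walk.cons_isCycle_iff]
          have hanotin : Sum.inr a ∉ Q.1.tail.support := by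
            rw [SimpleGraph.Walk.support_tail_of_not_nil _ hqnn]
            have hnd : Q.1.support.Nodup := Q.2.support_nodup
            rw [Q.1.support_eq_cons] at hnd
            exact (List.nodup_cons.mp hnd).1
          have htsub := Q.1.tail.support_takeUntil_subset hmem'
          constructor
          · refine SimpleGraph.Walk.IsPath.cons ?_ ?_
            · exact (Q.2.tail).takeUntil _
            · exact fun hc => hanotin (htsub hc)
          · intro hc
            rw [SimpleGraph.Walk.edges_cons, List.mem_cons] at hc
            rcases hc with hc | hc
            · rw [Sym2.eq_iff] at hc
              rcases hc with ⟨h1', _⟩ | ⟨h1', _⟩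
              · exact Sum.inl_ne_inr h1'
              · rw [hg₀eq] at h1'
                exact hne0 (Sum.inl.inj h1')
            · exact hanotin (htsub
                (SimpleGraph.Walk.snd_mem_support_of_mem_edges _ hc))
        exact hacyc _ hcyc
      have hpath : (SimpleGraph.Walk.cons (hadj h a hah) Q.1).IsPath :=
        Q.2.cons hnot
      have hroot : h ≠ root := by
        intro he
        apply hnot
        have := Q.1.end_mem_support
        rw [he]
        exact this
      have hPeq : P h = ⟨SimpleGraph.Walk.cons (hadj h a hah) Q.1, hpath⟩ := upath _ _
      have hsp := hpar_spec h hroot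
      rw [hPeq] at hsp
      have : (SimpleGraph.Walk.cons (hadj h a hah) Q.1).getVert 2 = Q.1.getVert 1 :=
        SimpleGraph.Walk.getVert_cons_succ _ _
      rw [this, hg₀eq] at hsp
      exact ⟨hroot, Subtype.ext (Sum.inl.inj hsp)⟩
    by_cases hf0 : f.1 = g₀
    · have hg0 : g.1 ≠ g₀ := fun h => hfg (Subtype.ext (hf0.trans h.symm))
      right; right
      rw [(main g hag hg0).2]
      exact Subtype.ext hf0.symm
    by_cases hgg0 : g.1 = g₀
    · right; left
      rw [(main f haf hf0).2]
      exact Subtype.ext hgg0.symm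
    · left
      rw [(main f haf hf0).2, (main g hag hgg0).2]
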